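/- Let α be an involutive automorphism of a field F, and let B = (I | S) be a standard representation over F with basis X. Let A = R(B,α) be the matrix with blocks 0, S, α(−Sᵀ), 0 and A' = R(B,id) with blocks 0, S, −Sᵀ, 0. Then for all Y ⊆ V, A[Y] is nonsingular iff A'[Y] is nonsingular; hence M_A = M_{A'}. Consequently, a matroid is α-representable as a delta-matroid for some (equivalently, every) involutive automorphism α of F if and only if it is representable over F in the usual matroid sense. -/

import Mathlib

open Matrix
open scoped symmDiff

variable {V : Type} [Fintype V] [DecidableEq V]

/-- principal submatrix of A indexed by X -/
def pSub {F : Type} [Field F] (A : Matrix V V F) (X : Finset V) : Matrix X X F :=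
  Matrix.of fun i j => A i.1 j.1

open scoped Classical in
/-- the set system of index sets of nonsingular principal submatrices of A -/
noncomputable def MA {F : Type} [Field F] (A : Matrix V V F) : Finset (Finset V) :=
  Finset.univ.filter (fun X => (pSub A X).det ≠ 0)

/-- pivot (twist) of a set system on X -/
def pivotOp (E : Finset (Finset V)) (X : Finset V) : Finset (Finset V) :=
  E.image (fun Y => Y ∆ X)

/-- loop complementation of a set system on u -/
def loopC (E : Finset (Finset V)) (u : V) : Finset (Finset V) :=
  E ∆ ((E.filter (fun Y => u ∉ Y)).image (fun Y => insert u Y))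

/-- apply a sequence of vertex flips: `Sum.inl u` is pivot *u,
`Sum.inr u` is loop complementation +u -/
def applyFlips (E : Finset (Finset V)) (φ : List (V ⊕ V)) : Finset (Finset V) :=
  φ.foldl (fun E op => match op with
    | Sum.inl u => pivotOp E {u}
    | Sum.inr u => loopC E u) E

/-- a delta-matroid: a nonempty set system satisfying symmetric exchange -/
def IsDeltaMatroid (E : Finset (Finset V)) : Prop :=
  E.Nonempty ∧ ∀ X ∈ E, ∀ Y ∈ E, ∀ u ∈ X ∆ Y,
    X ∆ ({u} : Finset V) ∈ E ∨ ∃ v ∈ X ∆ Y, v ≠ u ∧ X ∆ ({u, v} : Finset V) ∈ E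

/-- A is inv-symmetric over GF(4): inv(−Aᵀ) = A entrywise, inv = (·²) -/
def InvSymm (A : Matrix V V (GaloisField 2 2)) : Prop :=
  ∀ i j, (-(Aᵀ i j)) ^ 2 = A i j
/-- the columns of A indexed by Y are linearly independent -/
def ColIndep {W F : Type} [Field F] [Fintype W] (A : Matrix W V F) (Y : Finset V) : Prop :=
  LinearIndependent F (fun y : Y => (Aᵀ y.1 : W → F))

open scoped Classical in
/-- the bases (maximal column-independent sets) of the column matroid of A -/
noncomputable def colBases {W F : Type} [Field F] [Fintype W] (A : Matrix W V F) :
    Finset (Finset V) :=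
  Finset.univ.filter (fun Y => ColIndep A Y ∧ ∀ Z, Y ⊆ Z → ColIndep A Z → Y = Z)
/-- M is α-representable over F as a delta-matroid -/
def AlphaRep {F : Type} [Field F] (α : F ≃+* F) (M : Finset (Finset V)) : Prop :=
  ∃ A : Matrix V V F, (∀ i j, α (-(Aᵀ i j)) = A i j) ∧
    ∃ Z : Finset V, M = pivotOp (MA A) Z

/-- M is representable over F in the usual matroid sense: it is the family of
bases of the column matroid of some matrix over F -/
def MatRep (F : Type) [Field F] (M : Finset (Finset V)) : Prop :=
  ∃ (n : ℕ) (A : Matrix (Fin n) V F), M = colBases A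



section Aux
set_option linter.unusedSectionVars false
variable {F : Type} [Field F]

lemma det_offdiag_zero {m n : Type} [Fintype m] [Fintype n] [DecidableEq m] [DecidableEq n]
    (M : Matrix (m ⊕ n) (m ⊕ n) F)
    (h1 : ∀ i j, M (Sum.inl i) (Sum.inl j) = 0)
    (h2 : ∀ i j, M (Sum.inr i) (Sum.inr j) = 0)
    (hc : Fintype.card m ≠ Fintype.card n) : M.det = 0 := by
  rw [Matrix.det_apply]
  refine Finset.sum_eq_zero fun σ _ => ?_
  suffices h : ∃ i, M (σ i) i = 0 by
    obtain ⟨i, hi⟩ := h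
    refine smul_eq_zero_of_right _ ?_
    exact Finset.prod_eq_zero (Finset.mem_univ i) (by exact hi)
  by_contra hcon
  push_neg at hcon
  have hml : ∀ i : m, ∃ j : n, σ (Sum.inl i) = Sum.inr j := by
    intro i
    rcases h : σ (Sum.inl i) with j | j
    · exact absurd (by rw [h]; exact h1 j i) (hcon (Sum.inl i))
    · exact ⟨j, rfl⟩
  have hnr : ∀ i : n, ∃ j : m, σ (Sum.inr i) = Sum.inl j := by
    intro i
    rcases h : σ (Sum.inr i) with j | j
    · exact ⟨j, rfl⟩
    · exact absurd (by rw [h]; exact h2 j i) (hcon (Sum.inr i))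
  choose f hf using hml
  choose g hg using hnr
  have hfinj : Function.Injective f := by
    intro a b hab
    have : σ (Sum.inl a) = σ (Sum.inl b) := by rw [hf a, hf b, hab]
    exact Sum.inl_injective (σ.injective this)
  have hginj : Function.Injective g := by
    intro a b hab
    have : σ (Sum.inr a) = σ (Sum.inr b) := by rw [hg a, hg b, hab]
    exact Sum.inr_injective (σ.injective this)
  exact hc (le_antisymm (Fintype.card_le_of_injective f hfinj)
    (Fintype.card_le_of_injective g hginj))

lemma det_offdiag_ne_zero_iff {m n : Type} [Fintype m] [Fintype n] [DecidableEq m] [DecidableEq n]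
    (e : m ≃ n) (M : Matrix (m ⊕ n) (m ⊕ n) F)
    (h1 : ∀ i j, M (Sum.inl i) (Sum.inl j) = 0)
    (h2 : ∀ i j, M (Sum.inr i) (Sum.inr j) = 0) :
    M.det ≠ 0 ↔ ((Matrix.of fun i j => M (Sum.inl i) (Sum.inr (e j))).det ≠ 0 ∧
      (Matrix.of fun i j => M (Sum.inr i) (Sum.inl (e.symm j))).det ≠ 0) := by
  set f : (m ⊕ n) ≃ (m ⊕ n) :=
    (Equiv.sumCongr e e.symm).trans (Equiv.sumComm n m) with hfdef
  have hsub : M.submatrix id f =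
      Matrix.fromBlocks (Matrix.of fun i j => M (Sum.inl i) (Sum.inr (e j))) 0 0
        (Matrix.of fun i j => M (Sum.inr i) (Sum.inl (e.symm j))) := by
    ext i j
    rcases i with i | i <;> rcases j with j | j <;>
      simp [hfdef, Matrix.fromBlocks, h1, h2]
  have hdet := Matrix.det_permute' f M
  rw [hsub, Matrix.det_fromBlocks_zero₂₁] at hdet
  have hs : ((Equiv.Perm.sign f : ℤ) : F) ≠ 0 := by
    rcases Int.units_eq_one_or (Equiv.Perm.sign f) with h | h <;> simp [h]
  constructor
  · intro h
    constructor
    · intro h0; rw [h0, zero_mul] at hdet; exact (mul_ne_zero hs h) hdet.symm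
    · intro h0; rw [h0, mul_zero] at hdet; exact (mul_ne_zero hs h) hdet.symm
  · rintro ⟨hb, hc⟩ h0
    rw [h0, mul_zero] at hdet
    exact (mul_ne_zero hb hc) hdet

open scoped Classical in
lemma det_pSub_ne_zero_iff (β : F →+* F) (hβ : Function.Injective β)
    (X : Finset V) (S : Matrix X {a // a ∉ X} F) (A : Matrix V V F)
    (hA : ∀ i j : V, A i j =
      if hi : i ∈ X then
        (if hj : j ∈ X then 0 else S ⟨i, hi⟩ ⟨j, hj⟩)
      else
        (if hj : j ∈ X then β (-(S ⟨j, hj⟩ ⟨i, hi⟩)) else 0))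
    (Y : Finset V) :
    (pSub A Y).det ≠ 0 ↔
      ∃ e : {y : Y // (y : V) ∈ X} ≃ {y : Y // ¬ (y : V) ∈ X},
        (Matrix.of fun i j : {y : Y // (y : V) ∈ X} =>
          S ⟨i.1.1, i.2⟩ ⟨(e j).1.1, (e j).2⟩).det ≠ 0 := by
  classical
  set p : ↥Y → Prop := fun y => (y : V) ∈ X with hp
  set ec : {y : Y // (y : V) ∈ X} ⊕ {y : Y // ¬ (y : V) ∈ X} ≃ Y := Equiv.sumCompl p with hec
  set M : Matrix _ _ F := (pSub A Y).submatrix ec ec with hM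
  have hdet : (pSub A Y).det = M.det := (Matrix.det_submatrix_equiv_self ec _).symm
  have h1 : ∀ i j, M (Sum.inl i) (Sum.inl j) = 0 := by
    intro i j
    simp only [hM, Matrix.submatrix_apply, hec, Equiv.sumCompl_apply_inl, pSub, Matrix.of_apply]
    rw [hA]
    simp [i.2, j.2]
  have h2 : ∀ i j, M (Sum.inr i) (Sum.inr j) = 0 := by
    intro i j
    simp only [hM, Matrix.submatrix_apply, hec, Equiv.sumCompl_apply_inr, pSub, Matrix.of_apply]
    rw [hA]
    simp [i.2, j.2]
  by_cases hcard : Fintype.card {y : Y // (y : V) ∈ X} = Fintype.card {y : Y // ¬ (y : V) ∈ X}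
  · obtain ⟨e⟩ := Fintype.card_eq.mp hcard
    have hB : (Matrix.of fun i j => M (Sum.inl i) (Sum.inr (e j))) =
        (Matrix.of fun i j : {y : Y // (y : V) ∈ X} =>
          S ⟨i.1.1, i.2⟩ ⟨(e j).1.1, (e j).2⟩) := by
      ext i j
      simp only [Matrix.of_apply, hM, Matrix.submatrix_apply, hec, Equiv.sumCompl_apply_inl,
        Equiv.sumCompl_apply_inr, pSub]
      rw [hA]
      simp [i.2, (e j).2]
    have hCval : ∀ i j, M (Sum.inr i) (Sum.inl (e.symm j)) =
        β (-(S ⟨(e.symm j).1.1, (e.symm j).2⟩ ⟨i.1.1, i.2⟩)) := by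
      intro i j
      simp only [hM, Matrix.submatrix_apply, hec, Equiv.sumCompl_apply_inl,
        Equiv.sumCompl_apply_inr, pSub, Matrix.of_apply]
      rw [hA]
      simp [i.2, (e.symm j).2]
    have hC : (Matrix.of fun i j => M (Sum.inr i) (Sum.inl (e.symm j))) =
        ((-(((Matrix.of fun i j : {y : Y // (y : V) ∈ X} =>
          S ⟨i.1.1, i.2⟩ ⟨(e j).1.1, (e j).2⟩).submatrix e.symm e.symm)ᵀ)).map β) := by
      ext i j
      simp only [Matrix.of_apply, Matrix.map_apply, Matrix.neg_apply, Matrix.transpose_apply,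
        Matrix.submatrix_apply, Equiv.apply_symm_apply, hCval]
    rw [hdet, det_offdiag_ne_zero_iff e M h1 h2, hB, hC]
    have hdc : ((-(((Matrix.of fun i j : {y : Y // (y : V) ∈ X} =>
          S ⟨i.1.1, i.2⟩ ⟨(e j).1.1, (e j).2⟩).submatrix e.symm e.symm)ᵀ)).map β).det =
        β ((-1) ^ Fintype.card {y : Y // ¬ (y : V) ∈ X} *
          (Matrix.of fun i j : {y : Y // (y : V) ∈ X} =>
            S ⟨i.1.1, i.2⟩ ⟨(e j).1.1, (e j).2⟩).det) := by
      rw [show ((-(((Matrix.of fun i j : {y : Y // (y : V) ∈ X} =>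
          S ⟨i.1.1, i.2⟩ ⟨(e j).1.1, (e j).2⟩).submatrix e.symm e.symm)ᵀ)).map β) =
          β.mapMatrix (-(((Matrix.of fun i j : {y : Y // (y : V) ∈ X} =>
          S ⟨i.1.1, i.2⟩ ⟨(e j).1.1, (e j).2⟩).submatrix e.symm e.symm)ᵀ)) from rfl,
        ← RingHom.map_det]
      congr 1
      rw [Matrix.det_neg, Matrix.det_transpose, Matrix.det_submatrix_equiv_self]
    constructor
    · rintro ⟨hb, -⟩; exact ⟨e, hb⟩
    · rintro ⟨e', he'⟩
      have htrans : (Matrix.of fun i j : {y : Y // (y : V) ∈ X} =>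
            S ⟨i.1.1, i.2⟩ ⟨(e' j).1.1, (e' j).2⟩) =
          (Matrix.of fun i j : {y : Y // (y : V) ∈ X} =>
            S ⟨i.1.1, i.2⟩ ⟨(e j).1.1, (e j).2⟩).submatrix id ((e'.trans e.symm) : _ ≃ _) := by
        ext i j
        simp [Matrix.submatrix_apply]
      rw [htrans, Matrix.det_permute'] at he'
      have hb : (Matrix.of fun i j : {y : Y // (y : V) ∈ X} =>
          S ⟨i.1.1, i.2⟩ ⟨(e j).1.1, (e j).2⟩).det ≠ 0 := by
        intro h0; rw [h0, mul_zero] at he'; exact he' rfl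
      refine ⟨hb, ?_⟩
      rw [hdc]
      intro h0
      have harg := hβ (h0.trans (map_zero β).symm)
      exact (mul_ne_zero (pow_ne_zero _ (neg_ne_zero.mpr (one_ne_zero))) hb) harg
  · have hz : M.det = 0 := det_offdiag_zero M h1 h2 hcard
    rw [hdet, hz]
    simp only [ne_eq, not_true_eq_false, false_iff, not_exists]
    intro e
    exact absurd (Fintype.card_congr e) hcard

/-- the standard representation matrix (I | S) -/
def stdT (X : Finset V) (S : Matrix X {a // a ∉ X} F) : Matrix X V F :=
  Matrix.of fun i j => if h : j ∈ X then (if i = ⟨j, h⟩ then (1:F) else 0) else S i ⟨j, h⟩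

lemma colIndep_card_le {W : Type} [Fintype W] (T : Matrix W V F) (Z : Finset V)
    (h : ColIndep T Z) : Z.card ≤ Fintype.card W := by
  have := h.fintype_card_le_finrank
  simpa [Module.finrank_fintype_fun_eq_card, Fintype.card_coe] using this

lemma stdT_col_mem (X : Finset V) (S : Matrix X {a // a ∉ X} F) (x : X) :
    (stdT X S)ᵀ (x : V) = Pi.single x 1 := by
  funext i
  simp only [Matrix.transpose_apply, stdT, Matrix.of_apply, x.2, dif_pos, Finset.coe_mem]
  rw [Subtype.coe_eta, Pi.single_apply]

lemma colIndep_equiv {W W' : Type} [Fintype W] [Fintype W'] (e : W' ≃ W)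
    (T : Matrix W V F) (Y : Finset V) :
    ColIndep (T.submatrix e id) Y ↔ ColIndep T Y := by
  unfold ColIndep
  have hφ : ∀ y : Y, ((T.submatrix e id)ᵀ y.1 : W' → F) =
      (LinearEquiv.funCongrLeft F F e) (Tᵀ y.1) := by
    intro y; rfl
  rw [show (fun y : Y => ((T.submatrix e id)ᵀ y.1 : W' → F)) =
    (fun y : Y => (LinearEquiv.funCongrLeft F F e) (Tᵀ y.1)) from funext hφ]
  exact LinearMap.linearIndependent_iff (LinearEquiv.funCongrLeft F F e).toLinearMap
    (LinearEquiv.ker _)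

lemma colBases_eq_of_colIndep_iff {W W' : Type} [Fintype W] [Fintype W']
    (T : Matrix W V F) (T' : Matrix W' V F)
    (h : ∀ Y : Finset V, ColIndep T Y ↔ ColIndep T' Y) : colBases T = colBases T' := by
  classical
  ext Y
  simp only [colBases, Finset.mem_filter, Finset.mem_univ, true_and]
  constructor
  · rintro ⟨h1, h2⟩
    exact ⟨(h Y).mp h1, fun Z hYZ hZ => h2 Z hYZ ((h Z).mpr hZ)⟩
  · rintro ⟨h1, h2⟩
    exact ⟨(h Y).mpr h1, fun Z hYZ hZ => h2 Z hYZ ((h Z).mp hZ)⟩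

lemma mem_colBases_iff (X : Finset V) (S : Matrix X {a // a ∉ X} F) (Y : Finset V) :
    Y ∈ colBases (stdT X S) ↔ ColIndep (stdT X S) Y ∧ Y.card = X.card := by
  classical
  simp only [colBases, Finset.mem_filter, Finset.mem_univ, true_and]
  constructor
  · rintro ⟨h1, h2⟩
    refine ⟨h1, ?_⟩
    by_contra hne
    have hlt : Y.card < X.card := by
      have := colIndep_card_le (stdT X S) Y h1
      rw [Fintype.card_coe] at this
      omega
    -- there is a column of X not in the span of the Y columns
    have hex : ∃ x : X, (Pi.single x 1 : X → F) ∉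
        Submodule.span F (Set.range fun y : Y => ((stdT X S)ᵀ y.1 : X → F)) := by
      by_contra hall
      push_neg at hall
      have htop : Submodule.span F (Set.range fun y : Y => ((stdT X S)ᵀ y.1 : X → F)) = ⊤ := by
        rw [Submodule.eq_top_iff']
        intro f
        have : f = ∑ i : X, f i • (Pi.single i 1 : X → F) := by
          funext j
          simp [Pi.single_apply, Finset.sum_apply, mul_comm]
        rw [this]
        exact Submodule.sum_mem _ fun i _ => Submodule.smul_mem _ _ (hall i)
      have hrank := finrank_range_le_card (R := F)
        (fun y : Y => ((stdT X S)ᵀ y.1 : X → F))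
      have hrank' : Module.finrank F (Submodule.span F
          (Set.range fun y : Y => ((stdT X S)ᵀ y.1 : X → F))) ≤ Y.card := by
        simpa [Set.finrank, Fintype.card_coe] using hrank
      rw [htop, finrank_top, Module.finrank_fintype_fun_eq_card, Fintype.card_coe] at hrank'
      omega
    obtain ⟨x, hx⟩ := hex
    have hxY : (x : V) ∉ Y := by
      intro hxy
      exact hx (Submodule.subset_span ⟨⟨(x : V), hxy⟩, stdT_col_mem X S x⟩)
    have hins : ColIndep (stdT X S) (insert (x : V) Y) := by
      have hset : (LinearIndependent F fun z : ↥(insert ((x : V)) (↑Y : Set V)) =>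
          ((stdT X S)ᵀ z.1 : X → F)) := by
        change LinearIndepOn F (fun z : V => ((stdT X S)ᵀ z : X → F)) (insert (x : V) (↑Y : Set V))
        rw [linearIndepOn_insert (by simpa using hxY)]
        refine ⟨h1, ?_⟩
        rw [Set.image_eq_range, stdT_col_mem]
        exact hx
      have hiff : ∀ z : V, z ∈ (insert ((x : V)) (↑Y : Set V)) ↔
          z ∈ ((insert (x : V) Y : Finset V) : Set V) := by
        simp
      exact (linearIndependent_equiv (Equiv.subtypeEquivRight hiff)).mp hset
    have := h2 _ (Finset.subset_insert _ _) hins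
    exact hxY (this ▸ Finset.mem_insert_self _ _)
  · rintro ⟨h1, h2⟩
    refine ⟨h1, fun Z hYZ hZ => ?_⟩
    have := colIndep_card_le (stdT X S) Z hZ
    rw [Fintype.card_coe] at this
    exact Finset.eq_of_subset_of_card_le hYZ (by omega)

/-- the cross equiv between two presentations of X ∩ Y -/
def cEquiv (X Y : Finset V) : {x : X // (x : V) ∈ Y} ≃ {y : Y // (y : V) ∈ X} where
  toFun i := ⟨⟨i.1.1, i.2⟩, i.1.2⟩
  invFun j := ⟨⟨j.1.1, j.2⟩, j.1.2⟩
  left_inv i := rfl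
  right_inv j := rfl

open scoped Classical in
lemma card_split (X Y : Finset V) :
    X.card = Fintype.card {x : X // (x : V) ∈ Y} + Fintype.card {x : X // ¬ (x : V) ∈ Y} := by
  classical
  rw [← Fintype.card_coe X, ← Fintype.card_sum]
  exact (Fintype.card_congr (Equiv.sumCompl (fun x : X => (x : V) ∈ Y))).symm

open scoped Classical in
lemma colIndep_card_iff_det (X : Finset V) (S : Matrix X {a // a ∉ X} F) (Y : Finset V) :
    (ColIndep (stdT X S) Y ∧ Y.card = X.card) ↔
      ∃ e : {x : X // ¬ (x : V) ∈ Y} ≃ {y : Y // ¬ (y : V) ∈ X},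
        (Matrix.of fun i j : {x : X // ¬ (x : V) ∈ Y} =>
          S i.1 ⟨(e j).1.1, (e j).2⟩).det ≠ 0 := by
  classical
  have hcards : Y.card = X.card ↔
      Fintype.card {x : X // ¬ (x : V) ∈ Y} = Fintype.card {y : Y // ¬ (y : V) ∈ X} := by
    rw [card_split X Y, card_split Y X]
    have := Fintype.card_congr (cEquiv X Y)
    omega
  -- main step: given an equiv e, ColIndep ↔ det ≠ 0
  have main : ∀ e : {x : X // ¬ (x : V) ∈ Y} ≃ {y : Y // ¬ (y : V) ∈ X},
      (ColIndep (stdT X S) Y ↔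
        (Matrix.of fun i j : {x : X // ¬ (x : V) ∈ Y} =>
          S i.1 ⟨(e j).1.1, (e j).2⟩).det ≠ 0) := by
    intro e
    set EX : {x : X // (x : V) ∈ Y} ⊕ {x : X // ¬ (x : V) ∈ Y} ≃ (X : Finset V) :=
      Equiv.sumCompl _ with hEX
    set EY : {x : X // (x : V) ∈ Y} ⊕ {x : X // ¬ (x : V) ∈ Y} ≃ (Y : Finset V) :=
      (Equiv.sumCongr (cEquiv X Y) e).trans (Equiv.sumCompl _) with hEY
    set Q : Matrix _ _ F :=
      Matrix.of fun i j : {x : X // (x : V) ∈ Y} ⊕ {x : X // ¬ (x : V) ∈ Y} =>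
        stdT X S (EX i) ((EY j : Y) : V) with hQ
    have hQblocks : Q = Matrix.fromBlocks 1
        (Matrix.of fun (i : {x : X // (x : V) ∈ Y}) (j : {x : X // ¬ (x : V) ∈ Y}) =>
          S i.1 ⟨(e j).1.1, (e j).2⟩) 0
        (Matrix.of fun i j : {x : X // ¬ (x : V) ∈ Y} =>
          S i.1 ⟨(e j).1.1, (e j).2⟩) := by
      ext i j
      rcases i with i | i <;> rcases j with j | j <;>
        simp only [hQ, Matrix.of_apply, hEX, hEY, Equiv.trans_apply, Equiv.sumCongr_apply,
          Sum.map_inl, Sum.map_inr, Equiv.sumCompl_apply_inl, Equiv.sumCompl_apply_inr,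
          Matrix.fromBlocks_apply₁₁, Matrix.fromBlocks_apply₁₂, Matrix.fromBlocks_apply₂₁,
          Matrix.fromBlocks_apply₂₂, Matrix.zero_apply, stdT]
      · -- (inl, inl) : identity block
        erw [dif_pos (((cEquiv X Y) j).2 : ((((cEquiv X Y) j) : Y) : V) ∈ X)]
        have hiff : (i.1 = (⟨(((cEquiv X Y) j : Y) : V), ((cEquiv X Y) j).2⟩ : X)) ↔ i = j := by
          constructor
          · intro h
            have hv : (i.1 : V) = ((((cEquiv X Y) j) : Y) : V) := congrArg Subtype.val h
            exact Subtype.ext (Subtype.ext hv)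
          · intro h; subst h; rfl
        erw [if_congr hiff rfl rfl]
        simp [Matrix.one_apply]
      · -- (inl, inr)
        erw [dif_neg ((e j).2 : ¬ (((e j : Y) : V) ∈ X))]
      · -- (inr, inl) : zero block
        erw [dif_pos (((cEquiv X Y) j).2 : ((((cEquiv X Y) j) : Y) : V) ∈ X)]
        erw [if_neg (fun h => i.2 (by
            have hv : (i.1 : V) = ((((cEquiv X Y) j) : Y) : V) := congrArg Subtype.val h
            rw [hv]
            exact (((cEquiv X Y) j) : Y).2))]
      · erw [dif_neg ((e j).2 : ¬ (((e j : Y) : V) ∈ X))]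
    have hQdet : Q.det = (Matrix.of fun i j : {x : X // ¬ (x : V) ∈ Y} =>
        S i.1 ⟨(e j).1.1, (e j).2⟩).det := by
      rw [hQblocks, Matrix.det_fromBlocks_zero₂₁, Matrix.det_one, one_mul]
    have hcols : ColIndep (stdT X S) Y ↔ IsUnit Q := by
      unfold ColIndep
      rw [← linearIndependent_equiv EY (f := fun y : Y => ((stdT X S)ᵀ y.1 : X → F))]
      rw [← Matrix.linearIndependent_cols_iff_isUnit]
      constructor
      · intro h
        have hfe : (fun j => (Qᵀ j : _ → F)) =
            (fun j => (LinearEquiv.funCongrLeft F F EX)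
              (((fun y : Y => ((stdT X S)ᵀ y.1 : X → F)) ∘ ⇑EY) j)) := by
          funext j; rfl
        change LinearIndependent F (fun j => (Qᵀ j : _ → F))
        rw [hfe]
        exact h.map' (LinearEquiv.funCongrLeft F F EX).toLinearMap
          (LinearEquiv.ker _)
      · intro h
        have hfe : ((fun y : Y => ((stdT X S)ᵀ y.1 : X → F)) ∘ ⇑EY) =
            (fun j => (LinearEquiv.funCongrLeft F F EX).symm ((Qᵀ j : _ → F))) := by
          funext j
          apply (LinearEquiv.funCongrLeft F F EX).injective
          simp only [LinearEquiv.apply_symm_apply]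
          rfl
        rw [hfe]
        exact h.map' (LinearEquiv.funCongrLeft F F EX).symm.toLinearMap
          (LinearEquiv.ker _)
    rw [hcols, Matrix.isUnit_iff_isUnit_det, isUnit_iff_ne_zero, hQdet]
  constructor
  · rintro ⟨h1, h2⟩
    obtain ⟨e⟩ := Fintype.card_eq.mp (hcards.mp h2)
    exact ⟨e, (main e).mp h1⟩
  · rintro ⟨e, he⟩
    exact ⟨(main e).mpr he, hcards.mpr (Fintype.card_congr e)⟩

-- new material
lemma mem_pivotOp (E : Finset (Finset V)) (X Y : Finset V) :
    Y ∈ pivotOp E X ↔ Y ∆ X ∈ E := by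
  simp only [pivotOp, Finset.mem_image]
  constructor
  · rintro ⟨W, hW, rfl⟩
    rwa [symmDiff_symmDiff_cancel_right]
  · intro h
    exact ⟨Y ∆ X, h, by rw [symmDiff_symmDiff_cancel_right]⟩

lemma mem_MA (A : Matrix V V F) (Y : Finset V) :
    Y ∈ MA A ↔ (pSub A Y).det ≠ 0 := by
  simp [MA]

def q1Equiv (X Y : Finset V) :
    {w : (Y ∆ X : Finset V) // (w : V) ∈ X} ≃ {x : X // ¬ (x : V) ∈ Y} where
  toFun w := ⟨⟨w.1.1, w.2⟩, by
    have := w.1.2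
    rw [Finset.mem_symmDiff] at this
    rcases this with ⟨-, h⟩ | ⟨-, h⟩
    · exact absurd w.2 h
    · exact h⟩
  invFun x := ⟨⟨x.1.1, by
    rw [Finset.mem_symmDiff]
    exact Or.inr ⟨x.1.2, x.2⟩⟩, x.1.2⟩
  left_inv w := rfl
  right_inv x := rfl

def q2Equiv (X Y : Finset V) :
    {w : (Y ∆ X : Finset V) // ¬ (w : V) ∈ X} ≃ {y : Y // ¬ (y : V) ∈ X} where
  toFun w := ⟨⟨w.1.1, by
    have := w.1.2
    rw [Finset.mem_symmDiff] at this
    rcases this with ⟨h, -⟩ | ⟨h, -⟩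
    · exact h
    · exact absurd h w.2⟩, w.2⟩
  invFun y := ⟨⟨y.1.1, by
    rw [Finset.mem_symmDiff]
    exact Or.inl ⟨y.1.2, y.2⟩⟩, y.2⟩
  left_inv w := rfl
  right_inv y := rfl

lemma exists_e_transfer (X Y : Finset V) (S : Matrix X {a // a ∉ X} F) :
    (∃ e : {w : (Y ∆ X : Finset V) // (w : V) ∈ X} ≃ {w : (Y ∆ X : Finset V) // ¬ (w : V) ∈ X},
        (Matrix.of fun i j : {w : (Y ∆ X : Finset V) // (w : V) ∈ X} =>
          S ⟨i.1.1, i.2⟩ ⟨(e j).1.1, (e j).2⟩).det ≠ 0) ↔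
      (∃ e' : {x : X // ¬ (x : V) ∈ Y} ≃ {y : Y // ¬ (y : V) ∈ X},
        (Matrix.of fun i j : {x : X // ¬ (x : V) ∈ Y} =>
          S i.1 ⟨(e' j).1.1, (e' j).2⟩).det ≠ 0) := by
  have key : ∀ e : {w : (Y ∆ X : Finset V) // (w : V) ∈ X} ≃
      {w : (Y ∆ X : Finset V) // ¬ (w : V) ∈ X},
      (Matrix.of fun i j : {w : (Y ∆ X : Finset V) // (w : V) ∈ X} =>
          S ⟨i.1.1, i.2⟩ ⟨(e j).1.1, (e j).2⟩) =
        (Matrix.of fun i j : {x : X // ¬ (x : V) ∈ Y} =>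
          S i.1 ⟨(((q1Equiv X Y).symm.trans (e.trans (q2Equiv X Y))) j).1.1,
            (((q1Equiv X Y).symm.trans (e.trans (q2Equiv X Y))) j).2⟩).submatrix
          (q1Equiv X Y) (q1Equiv X Y) := by
    intro e
    ext i j
    simp only [Matrix.of_apply, Matrix.submatrix_apply, Equiv.trans_apply,
      Equiv.symm_apply_apply]
    rfl
  constructor
  · rintro ⟨e, he⟩
    refine ⟨(q1Equiv X Y).symm.trans (e.trans (q2Equiv X Y)), ?_⟩
    rwa [key e, Matrix.det_submatrix_equiv_self] at he
  · rintro ⟨e', he'⟩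
    set e := (q1Equiv X Y).trans (e'.trans (q2Equiv X Y).symm) with hedef
    have heq : (q1Equiv X Y).symm.trans (e.trans (q2Equiv X Y)) = e' := by
      ext x
      simp [hedef]
    refine ⟨e, ?_⟩
    rw [key e, Matrix.det_submatrix_equiv_self, heq]
    exact he'

lemma pivot_eq_colBases (X : Finset V) (S : Matrix X {a // a ∉ X} F) (A' : Matrix V V F)
    (hA' : ∀ i j : V, A' i j =
      if hi : i ∈ X then
        (if hj : j ∈ X then 0 else S ⟨i, hi⟩ ⟨j, hj⟩)
      else
        (if hj : j ∈ X then -(S ⟨j, hj⟩ ⟨i, hi⟩) else 0)) :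
    pivotOp (MA A') X = colBases (stdT X S) := by
  ext Y
  rw [mem_pivotOp, mem_MA, mem_colBases_iff, colIndep_card_iff_det,
    det_pSub_ne_zero_iff (RingHom.id F) (fun a b h => h) X S A' (by simpa using hA')]
  exact exists_e_transfer X Y S

lemma exists_S_of_basis {W : Type} [Fintype W] (A0 : Matrix W V F) (X : Finset V)
    (hX : X ∈ colBases A0) :
    ∃ S : Matrix X {a // a ∉ X} F, ∀ Y, ColIndep A0 Y ↔ ColIndep (stdT X S) Y := by
  classical
  rw [colBases, Finset.mem_filter] at hX
  obtain ⟨-, hXi, hXmax⟩ := hX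
  have hspan : ∀ j : {a // a ∉ X}, ∃ c : X → F,
      ∑ i : X, c i • (A0ᵀ i.1 : W → F) = A0ᵀ j.1 := by
    rintro ⟨v, hv⟩
    have hni : ¬ ColIndep A0 (insert v X) := by
      intro h
      have := hXmax _ (Finset.subset_insert _ _) h
      exact hv (this ▸ Finset.mem_insert_self v X)
    have hni' : ¬ (LinearIndependent F fun z : ↥(insert v (↑X : Set V)) =>
        (A0ᵀ z.1 : W → F)) := by
      intro h
      apply hni
      have hiff : ∀ z : V, z ∈ (insert v (↑X : Set V)) ↔
          z ∈ ((insert v X : Finset V) : Set V) := by simp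
      exact (linearIndependent_equiv (Equiv.subtypeEquivRight hiff)).mp h
    change ¬ LinearIndepOn F (fun z : V => (A0ᵀ z : W → F)) (insert v (↑X : Set V)) at hni'
    rw [linearIndepOn_insert (by simpa using hv)] at hni'
    push_neg at hni'
    have hmem := hni' hXi
    rw [Set.image_eq_range] at hmem
    rw [Submodule.mem_span_range_iff_exists_fun] at hmem
    exact hmem
  choose Sfun hSfun using hspan
  refine ⟨Matrix.of fun i j => Sfun j i, fun Y => ?_⟩
  -- the linear map sending coordinates to column combinations
  set Φ : (X → F) →ₗ[F] (W → F) :=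
    { toFun := fun c => ∑ i : X, c i • (A0ᵀ i.1 : W → F)
      map_add' := by
        intro a b
        simp only [Pi.add_apply, add_smul]
        rw [Finset.sum_add_distrib]
      map_smul' := by
        intro r a
        simp only [Pi.smul_apply, smul_eq_mul, RingHom.id_apply, Finset.smul_sum, smul_smul] } with hΦ
  have hker : LinearMap.ker Φ = ⊥ := by
    rw [LinearMap.ker_eq_bot']
    intro c hc
    have := Fintype.linearIndependent_iff.mp hXi c hc
    funext i
    exact this i
  have hcol : ∀ v : V, (A0ᵀ v : W → F) = Φ ((stdT X (Matrix.of fun i j => Sfun j i))ᵀ v) := by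
    intro v
    by_cases hv : v ∈ X
    · rw [show v = ((⟨v, hv⟩ : X) : V) from rfl, stdT_col_mem]
      simp only [hΦ, LinearMap.coe_mk, AddHom.coe_mk]
      rw [Finset.sum_eq_single (⟨v, hv⟩ : X)]
      · simp
      · intro b _ hb
        rw [Pi.single_apply, if_neg (fun hcontra => hb hcontra), zero_smul]
      · intro h; exact absurd (Finset.mem_univ _) h
    · have : ((stdT X (Matrix.of fun i j => Sfun j i))ᵀ v) =
          fun i => Sfun ⟨v, hv⟩ i := by
        funext i
        simp [stdT, hv]
      rw [this]
      simp only [hΦ, LinearMap.coe_mk, AddHom.coe_mk]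
      exact (hSfun ⟨v, hv⟩).symm
  constructor
  · intro h
    unfold ColIndep at h ⊢
    have heq : (fun y : Y => ((A0)ᵀ y.1 : W → F)) =
        Φ ∘ (fun y : Y => ((stdT X (Matrix.of fun i j => Sfun j i))ᵀ y.1)) := by
      funext y
      exact hcol y.1
    rw [heq] at h
    exact LinearIndependent.of_comp Φ h
  · intro h
    unfold ColIndep at h ⊢
    have heq : (fun y : Y => ((A0)ᵀ y.1 : W → F)) =
        Φ ∘ (fun y : Y => ((stdT X (Matrix.of fun i j => Sfun j i))ᵀ y.1)) := by
      funext y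
      exact hcol y.1
    rw [heq]
    exact h.map' Φ hker

lemma empty_mem_MA (A : Matrix V V F) : ∅ ∈ MA A := by
  rw [mem_MA]
  have : (pSub A ∅).det = 1 := Matrix.det_isEmpty
  simp [this]

lemma det_pSub_singleton (A : Matrix V V F) (u : V) :
    (pSub A {u}).det = A u u := by
  obtain ⟨e, he⟩ : ∃ e : Unit ≃ ({u} : Finset V), ((e () : ({u} : Finset V)) : V) = u :=
    ⟨⟨fun _ => ⟨u, Finset.mem_singleton_self u⟩, fun _ => (), fun _ => rfl,
      fun w => Subtype.ext (Finset.mem_singleton.mp w.2).symm⟩, rfl⟩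
  rw [← Matrix.det_submatrix_equiv_self e, Matrix.det_unique]
  simp [pSub, he]

lemma det_pSub_pair (A : Matrix V V F) (u v : V) (huv : u ≠ v) :
    (pSub A {u, v}).det = A u u * A v v - A u v * A v u := by
  have hu : u ∈ ({u, v} : Finset V) := by simp
  have hv : v ∈ ({u, v} : Finset V) := by simp
  obtain ⟨e, he0, he1⟩ : ∃ e : Fin 2 ≃ ({u, v} : Finset V),
      ((e 0 : ({u, v} : Finset V)) : V) = u ∧ ((e 1 : ({u, v} : Finset V)) : V) = v := by
    refine ⟨⟨![⟨u, hu⟩, ⟨v, hv⟩], fun w => if (w : V) = u then 0 else 1, ?_, ?_⟩, rfl, rfl⟩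
    · intro i
      fin_cases i
      · simp
      · simp only [Matrix.cons_val_one, Matrix.head_cons]
        rw [if_neg (by exact fun h => huv h.symm)]
        rfl
    · intro w
      rcases Finset.mem_insert.mp w.2 with h | h
      · show ![(⟨u, hu⟩ : ({u,v} : Finset V)), ⟨v, hv⟩] (if (w : V) = u then 0 else 1) = w
        rw [if_pos h]
        exact Subtype.ext h.symm
      · have h' := Finset.mem_singleton.mp h
        show ![(⟨u, hu⟩ : ({u,v} : Finset V)), ⟨v, hv⟩] (if (w : V) = u then 0 else 1) = w
        rw [if_neg (fun hh => huv (hh.symm.trans h'))]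
        exact Subtype.ext h'.symm
  rw [← Matrix.det_submatrix_equiv_self e, Matrix.det_fin_two]
  simp [pSub, he0, he1]

lemma offdiag_zero_of_equicard (α : F ≃+* F) (A : Matrix V V F)
    (hsym : ∀ i j, α (-(Aᵀ i j)) = A i j) (Z : Finset V)
    (hcard : ∀ W ∈ MA A, (W ∆ Z).card = Z.card) :
    ∀ u v : V, (u ∈ Z ↔ v ∈ Z) → A u v = 0 := by
  have hdiag : ∀ u, A u u = 0 := by
    intro u
    by_contra h
    have hmem : {u} ∈ MA A := by
      rw [mem_MA, det_pSub_singleton]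
      exact h
    have hc := hcard _ hmem
    by_cases hu : u ∈ Z
    · have : ({u} : Finset V) ∆ Z = Z.erase u := by
        ext a
        simp only [Finset.mem_symmDiff, Finset.mem_singleton, Finset.mem_erase]
        constructor
        · rintro (⟨rfl, h2⟩ | ⟨h1, h2⟩)
          · exact absurd hu h2
          · exact ⟨h2, h1⟩
        · rintro ⟨h1, h2⟩
          exact Or.inr ⟨h2, h1⟩
      rw [this, Finset.card_erase_of_mem hu] at hc
      have : 0 < Z.card := Finset.card_pos.mpr ⟨u, hu⟩
      omega
    · have : ({u} : Finset V) ∆ Z = insert u Z := by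
        ext a
        simp only [Finset.mem_symmDiff, Finset.mem_singleton, Finset.mem_insert]
        constructor
        · rintro (⟨rfl, h2⟩ | ⟨h1, h2⟩)
          · exact Or.inl rfl
          · exact Or.inr h1
        · rintro (rfl | h1)
          · exact Or.inl ⟨rfl, hu⟩
          · by_cases ha : a = u
            · exact Or.inl ⟨ha, ha ▸ hu⟩
            · exact Or.inr ⟨h1, ha⟩
      rw [this, Finset.card_insert_of_notMem hu] at hc
      omega
  intro u v hiff
  by_cases huv : u = v
  · subst huv; exact hdiag u
  by_contra h
  have hvu : A v u ≠ 0 := by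
    rw [← hsym]
    simp only [Matrix.transpose_apply, ne_eq, EmbeddingLike.map_eq_zero_iff, neg_eq_zero]
    exact h
  have hmem : {u, v} ∈ MA A := by
    rw [mem_MA, det_pSub_pair A u v huv, hdiag u, hdiag v]
    simp only [mul_zero, zero_mul, zero_sub, ne_eq, neg_eq_zero]
    exact fun hc => (mul_ne_zero h hvu) hc
  have hc := hcard _ hmem
  have hpaircard : ({u, v} : Finset V).card = 2 := by
    rw [Finset.card_insert_of_notMem (by simpa using huv), Finset.card_singleton]
  by_cases hu : u ∈ Z
  · have hvZ : v ∈ Z := hiff.mp hu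
    have hsub : ({u, v} : Finset V) ∆ Z = (Z.erase u).erase v := by
      ext a
      simp only [Finset.mem_symmDiff, Finset.mem_insert, Finset.mem_singleton,
        Finset.mem_erase]
      constructor
      · rintro (⟨rfl | rfl, h2⟩ | ⟨h1, h2⟩)
        · exact absurd hu h2
        · exact absurd hvZ h2
        · push_neg at h2
          exact ⟨h2.2, h2.1, h1⟩
      · rintro ⟨h1, h2, h3⟩
        exact Or.inr ⟨h3, by push_neg; exact ⟨h2, h1⟩⟩
    have hvZe : v ∈ Z.erase u := Finset.mem_erase.mpr ⟨fun hh => huv hh.symm, hvZ⟩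
    rw [hsub, Finset.card_erase_of_mem hvZe, Finset.card_erase_of_mem hu] at hc
    have h2le : 2 ≤ Z.card := by
      have : ({u, v} : Finset V) ⊆ Z := by
        intro a ha
        rcases Finset.mem_insert.mp ha with rfl | ha
        · exact hu
        · exact Finset.mem_singleton.mp ha ▸ hvZ
      calc 2 = ({u, v} : Finset V).card := hpaircard.symm
      _ ≤ Z.card := Finset.card_le_card this
    omega
  · have hvZ : v ∉ Z := fun hh => hu (hiff.mpr hh)
    have hsub : ({u, v} : Finset V) ∆ Z = insert u (insert v Z) := by
      ext a
      simp only [Finset.mem_symmDiff, Finset.mem_insert, Finset.mem_singleton]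
      constructor
      · rintro (⟨h1, h2⟩ | ⟨h1, h2⟩)
        · tauto
        · tauto
      · rintro (rfl | rfl | h1)
        · exact Or.inl ⟨Or.inl rfl, hu⟩
        · exact Or.inl ⟨Or.inr rfl, hvZ⟩
        · by_cases ha : a = u ∨ a = v
          · rcases ha with rfl | rfl
            · exact Or.inl ⟨Or.inl rfl, hu⟩
            · exact Or.inl ⟨Or.inr rfl, hvZ⟩
          · push_neg at ha
            exact Or.inr ⟨h1, by tauto⟩
    rw [hsub, Finset.card_insert_of_notMem (by simp [huv, hu]),
      Finset.card_insert_of_notMem hvZ] at hc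
    omega

end Aux

/-- for a standard representation B = (I | S) with basis X and an
involutive automorphism α, the matrices R(B,α) (blocks 0, S, α(−Sᵀ), 0) and
R(B,id) (blocks 0, S, −Sᵀ, 0) have the same nonsingular principal submatrices,
so M_(R(B,α)) = M_(R(B,id)); consequently a matroid is α-representable as a
delta-matroid for some (equivalently, every) involutive automorphism α of F iff
it is representable over F in the usual matroid sense. -/
theorem alphaRep_iff_matRep {F : Type} [Field F] :
    (∀ (α : F ≃+* F), (∀ x, α (α x) = x) →
      ∀ (X : Finset V) (S : Matrix X {a // a ∉ X} F)
        (A A' : Matrix V V F),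
        (∀ i j : V, A i j =
          if hi : i ∈ X then
            (if hj : j ∈ X then 0 else S ⟨i, hi⟩ ⟨j, hj⟩)
          else
            (if hj : j ∈ X then α (-(S ⟨j, hj⟩ ⟨i, hi⟩)) else 0)) →
        (∀ i j : V, A' i j =
          if hi : i ∈ X then
            (if hj : j ∈ X then 0 else S ⟨i, hi⟩ ⟨j, hj⟩)
          else
            (if hj : j ∈ X then -(S ⟨j, hj⟩ ⟨i, hi⟩) else 0)) →
        (∀ Y : Finset V, (pSub A Y).det ≠ 0 ↔ (pSub A' Y).det ≠ 0) ∧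
          MA A = MA A') ∧
    (∀ M : Finset (Finset V), IsDeltaMatroid M →
      (∀ Y ∈ M, ∀ Z ∈ M, Y.card = Z.card) →
      (((∃ α : F ≃+* F, (∀ x, α (α x) = x) ∧ AlphaRep α M) ↔ MatRep F M) ∧
       ((∀ α : F ≃+* F, (∀ x, α (α x) = x) → AlphaRep α M) ↔ MatRep F M))) := by
  classical
  -- the main determinant equivalence, for any injective ring endomorphism β
  have keyiff : ∀ (β : F →+* F), Function.Injective β →
      ∀ (X : Finset V) (S : Matrix X {a // a ∉ X} F) (A A' : Matrix V V F),
      (∀ i j : V, A i j =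
        if hi : i ∈ X then
          (if hj : j ∈ X then 0 else S ⟨i, hi⟩ ⟨j, hj⟩)
        else
          (if hj : j ∈ X then β (-(S ⟨j, hj⟩ ⟨i, hi⟩)) else 0)) →
      (∀ i j : V, A' i j =
        if hi : i ∈ X then
          (if hj : j ∈ X then 0 else S ⟨i, hi⟩ ⟨j, hj⟩)
        else
          (if hj : j ∈ X then -(S ⟨j, hj⟩ ⟨i, hi⟩) else 0)) →
      ∀ Y : Finset V, (pSub A Y).det ≠ 0 ↔ (pSub A' Y).det ≠ 0 := by
    intro β hβ X S A A' hA hA' Y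
    rw [det_pSub_ne_zero_iff β hβ X S A hA Y,
      det_pSub_ne_zero_iff (RingHom.id F) (fun a b h => h) X S A' (by simpa using hA') Y]
  constructor
  · -- part 1
    intro α hα X S A A' hA hA'
    have hiff := keyiff (α : F →+* F) α.injective X S A A' (by simpa using hA) hA'
    refine ⟨hiff, ?_⟩
    ext Y
    rw [mem_MA, mem_MA]
    exact hiff Y
  · -- part 2
    intro M hM hcardM
    -- (I) : MatRep → AlphaRep for every involutive α
    have dirI : MatRep F M → ∀ α : F ≃+* F, (∀ x, α (α x) = x) → AlphaRep α M := by
      rintro ⟨n, A0, rfl⟩ α hαinv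
      obtain ⟨X, hX⟩ := hM.1
      obtain ⟨S, hSiff⟩ := exists_S_of_basis A0 X hX
      have hbases : colBases A0 = colBases (stdT X S) :=
        colBases_eq_of_colIndep_iff _ _ hSiff
      set Aα : Matrix V V F := Matrix.of fun i j =>
        if hi : i ∈ X then
          (if hj : j ∈ X then 0 else S ⟨i, hi⟩ ⟨j, hj⟩)
        else
          (if hj : j ∈ X then α (-(S ⟨j, hj⟩ ⟨i, hi⟩)) else 0) with hAαdef
      set A' : Matrix V V F := Matrix.of fun i j =>
        if hi : i ∈ X then
          (if hj : j ∈ X then 0 else S ⟨i, hi⟩ ⟨j, hj⟩)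
        else
          (if hj : j ∈ X then -(S ⟨j, hj⟩ ⟨i, hi⟩) else 0) with hA'def
      have hAα : ∀ i j : V, Aα i j =
          if hi : i ∈ X then
            (if hj : j ∈ X then 0 else S ⟨i, hi⟩ ⟨j, hj⟩)
          else
            (if hj : j ∈ X then α (-(S ⟨j, hj⟩ ⟨i, hi⟩)) else 0) := fun i j => rfl
      have hA' : ∀ i j : V, A' i j =
          if hi : i ∈ X then
            (if hj : j ∈ X then 0 else S ⟨i, hi⟩ ⟨j, hj⟩)
          else
            (if hj : j ∈ X then -(S ⟨j, hj⟩ ⟨i, hi⟩) else 0) := fun i j => rfl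
      have hherm : ∀ i j, α (-(Aαᵀ i j)) = Aα i j := by
        intro i j
        rw [Matrix.transpose_apply, hAα j i, hAα i j]
        by_cases hi : i ∈ X <;> by_cases hj : j ∈ X
        · simp [hi, hj]
        · rw [dif_neg hj, dif_pos hi, dif_pos hi, dif_neg hj,
            map_neg α (S ⟨i, hi⟩ ⟨j, hj⟩), neg_neg, hαinv]
        · simp [hi, hj]
        · simp [hi, hj]
      have hMAeq : MA Aα = MA A' := by
        ext Y
        rw [mem_MA, mem_MA]
        exact keyiff (α : F →+* F) α.injective X S Aα A'
          (by simpa using hAα) hA' Y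
      refine ⟨Aα, hherm, X, ?_⟩
      rw [hbases, hMAeq, pivot_eq_colBases X S A' hA']
    -- (II) : AlphaRep for any α → MatRep
    have dirII : ∀ α : F ≃+* F, AlphaRep α M → MatRep F M := by
      rintro α ⟨A, hherm, Z, rfl⟩
      have hZmem : Z ∈ pivotOp (MA A) Z := by
        rw [mem_pivotOp, symmDiff_self]
        exact empty_mem_MA A
      have hwc : ∀ W ∈ MA A, (W ∆ Z).card = Z.card := by
        intro W hW
        have : W ∆ Z ∈ pivotOp (MA A) Z := Finset.mem_image_of_mem _ hW
        exact hcardM _ this _ hZmem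
      have hherm' : ∀ i j, α (-(Aᵀ i j)) = A i j := hherm
      have hzero := offdiag_zero_of_equicard α A hherm' Z hwc
      set S : Matrix Z {a // a ∉ Z} F := Matrix.of fun i j => A i.1 j.1 with hSdef
      have hA : ∀ i j : V, A i j =
          if hi : i ∈ Z then
            (if hj : j ∈ Z then 0 else S ⟨i, hi⟩ ⟨j, hj⟩)
          else
            (if hj : j ∈ Z then (α : F →+* F) (-(S ⟨j, hj⟩ ⟨i, hi⟩)) else 0) := by
        intro i j
        by_cases hi : i ∈ Z <;> by_cases hj : j ∈ Z
        · rw [dif_pos hi, dif_pos hj]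
          exact hzero i j (iff_of_true hi hj)
        · rw [dif_pos hi, dif_neg hj]; rfl
        · rw [dif_neg hi, dif_pos hj]
          rw [show ((α : F →+* F) (-(S ⟨j, hj⟩ ⟨i, hi⟩))) = α (-(Aᵀ i j)) from rfl, hherm']
        · rw [dif_neg hi, dif_neg hj]
          exact hzero i j (iff_of_false hi hj)
      set A' : Matrix V V F := Matrix.of fun i j =>
        if hi : i ∈ Z then
          (if hj : j ∈ Z then 0 else S ⟨i, hi⟩ ⟨j, hj⟩)
        else
          (if hj : j ∈ Z then -(S ⟨j, hj⟩ ⟨i, hi⟩) else 0) with hA'def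
      have hA' : ∀ i j : V, A' i j =
          if hi : i ∈ Z then
            (if hj : j ∈ Z then 0 else S ⟨i, hi⟩ ⟨j, hj⟩)
          else
            (if hj : j ∈ Z then -(S ⟨j, hj⟩ ⟨i, hi⟩) else 0) := fun i j => rfl
      have hMAeq : MA A = MA A' := by
        ext Y
        rw [mem_MA, mem_MA]
        exact keyiff (α : F →+* F) α.injective Z S A A' hA hA' Y
      have hstd : pivotOp (MA A) Z = colBases (stdT Z S) := by
        rw [hMAeq]
        exact pivot_eq_colBases Z S A' hA'
      set e : Fin (Fintype.card Z) ≃ (Z : Finset V) := (Fintype.equivFin Z).symm with hedef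
      refine ⟨Fintype.card Z, (stdT Z S).submatrix e id, ?_⟩
      rw [hstd]
      exact colBases_eq_of_colIndep_iff _ _ (fun Y => (colIndep_equiv e (stdT Z S) Y).symm)
    constructor
    · constructor
      · rintro ⟨α, hαinv, hrep⟩
        exact dirII α hrep
      · intro hmat
        exact ⟨RingEquiv.refl F, fun x => rfl, dirI hmat _ (fun x => rfl)⟩
    · constructor
      · intro hall
        exact dirII (RingEquiv.refl F) (hall _ (fun x => rfl))
      · intro hmat α hαinv
        exact dirI hmat α hαinv
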